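/- Let k ≥ 1 be an integer, let T be a tree on t ≥ 2 vertices, and let G be the simple graph obtained from T by attaching 2k−1 new pendant leaves to each vertex of T (so G has 2kt vertices and every original tree vertex has degree at least 2k in G). If G' is a random k-out subgraph of G, then for every edge {u,v} of T, the probability that {u,v} is not an edge of G' is at least 1/4; consequently, the expected number of inter-component edges of G with respect to G' is at least (t−1)/4. -/

import Mathlib

open Finset

variable {V : Type*}

/-- The set of legal choices of one vertex `v` in the random `k`-out model:
`v` picks a set of exactly `min k (deg v)` of its neighbours. -/
abbrev kOutChoice [Fintype V] [DecidableEq V] (G : SimpleGraph V) [DecidableRel G.Adj]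
    (k : ℕ) (v : V) :=
  {A : Finset V // A ⊆ G.neighborFinset v ∧ A.card = min k (G.degree v)}

/-- The sample space of the random `k`-out model: every vertex independently and
uniformly picks a legal choice; the uniform measure on this finite product space
is exactly the joint distribution of the vertices' independent uniform choices. -/
abbrev kOutSpace [Fintype V] [DecidableEq V] (G : SimpleGraph V) [DecidableRel G.Adj]
    (k : ℕ) :=
  ∀ v : V, kOutChoice G k v

/-- The random `k`-out subgraph determined by an outcome `ω`: an edge is present
iff it was chosen by at least one of its endpoints. -/
def kOutGraph [Fintype V] [DecidableEq V] (G : SimpleGraph V) [DecidableRel G.Adj]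
    (k : ℕ) (ω : kOutSpace G k) : SimpleGraph V :=
  SimpleGraph.fromRel (fun u v => v ∈ (ω u).1)

/-- The number of edges of `G` whose endpoints lie in different connected
components of `H` (the inter-component edges of `G` with respect to `H`). -/
noncomputable def interCompCount (G H : SimpleGraph V) : ℕ :=
  Set.ncard {e : Sym2 V | e ∈ G.edgeSet ∧ ∀ u v : V, e = s(u, v) → ¬ H.Reachable u v}

/-- The expected number of inter-component edges of `G` with respect to a random
`k`-out subgraph of `G`: the average over the (uniform) finite sample space. -/
noncomputable def kOutExpect [Fintype V] [DecidableEq V] (G : SimpleGraph V)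
    [DecidableRel G.Adj] (k : ℕ) : ℝ :=
  (∑ ω : kOutSpace G k, (interCompCount G (kOutGraph G k ω) : ℝ)) /
    (Fintype.card (kOutSpace G k) : ℝ)

private lemma choose_le_two_mul (k d : ℕ) (hk : 1 ≤ k) (hd : 2*k ≤ d) :
    d.choose k ≤ 2 * (d-1).choose k := by
  obtain ⟨e, rfl⟩ : ∃ e, d = e + 1 := ⟨d - 1, by omega⟩
  obtain ⟨j, rfl⟩ : ∃ j, k = j + 1 := ⟨k - 1, by omega⟩
  rw [Nat.choose_succ_succ]
  have h2 := Nat.choose_succ_right_eq e j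
  have h1 : e.choose j ≤ e.choose (j+1) := by
    have : e.choose j * (j+1) ≤ e.choose (j+1) * (j+1) := by
      rw [h2]; exact Nat.mul_le_mul_left _ (by omega)
    exact Nat.le_of_mul_le_mul_right this (by omega)
  simpa using by omega

private lemma card_pi_two {ι : Type*} [Fintype ι] [DecidableEq ι] (C : ι → Type*)
    [∀ i, Fintype (C i)] {u v : ι} (huv : v ≠ u) (P : C u → Prop) (Q : C v → Prop)
    [DecidablePred P] [DecidablePred Q] :
    ∃ R : ℕ, Fintype.card {ω : ∀ i, C i // P (ω u) ∧ Q (ω v)}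
        = Fintype.card {x : C u // P x} * (Fintype.card {y : C v // Q y} * R) ∧
      Fintype.card (∀ i, C i) = Fintype.card (C u) * (Fintype.card (C v) * R) := by
  classical
  set R' := ∀ j : {j : {j // j ≠ u} // j ≠ ⟨v, huv⟩}, C j.1.1 with hR'
  let E : (∀ i, C i) ≃ C u × (C v × R') :=
    (Equiv.piSplitAt u C).trans ((Equiv.refl (C u)).prodCongr
      (Equiv.piSplitAt (⟨v, huv⟩ : {j // j ≠ u}) (fun j : {j // j ≠ u} => C j.1)))
  refine ⟨Fintype.card R', ?_, ?_⟩
  · have e1 : {ω : ∀ i, C i // P (ω u) ∧ Q (ω v)}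
        ≃ {p : C u × (C v × R') // P p.1 ∧ Q p.2.1} :=
      Equiv.subtypeEquiv E (fun ω => Iff.rfl)
    have e2 : {p : C u × (C v × R') // P p.1 ∧ Q p.2.1}
        ≃ {x : C u // P x} × {p : C v × R' // Q p.1} :=
      Equiv.subtypeProdEquivProd (p := P) (q := fun p : C v × R' => Q p.1)
    have e3 : {p : C v × R' // Q p.1} ≃ {y : C v // Q y} × R' :=
      ((Equiv.subtypeEquivRight (fun p => by tauto)).trans
        (Equiv.subtypeProdEquivProd (p := Q) (q := fun _ : R' => True))).trans
        ((Equiv.refl _).prodCongr (Equiv.subtypeUnivEquiv (fun _ => trivial)))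
    rw [Fintype.card_congr (e1.trans (e2.trans ((Equiv.refl _).prodCongr e3)))]
    simp [Fintype.card_prod, mul_assoc]
  · rw [Fintype.card_congr E]; simp [Fintype.card_prod]

private lemma kOutChoice_nonempty [Fintype V] [DecidableEq V] (G : SimpleGraph V)
    [DecidableRel G.Adj] (k : ℕ) (v : V) : Nonempty (kOutChoice G k v) := by
  obtain ⟨A, hA1, hA2⟩ := Finset.exists_subset_card_eq (s := G.neighborFinset v)
    (n := min k (G.degree v))
    (by rw [SimpleGraph.card_neighborFinset_eq_degree]; exact min_le_right _ _)
  exact ⟨⟨A, hA1, hA2⟩⟩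

private lemma choice_count [Fintype V] [DecidableEq V] (G : SimpleGraph V)
    [DecidableRel G.Adj] (k : ℕ) (hk : 1 ≤ k) (u w : V) (hadj : G.Adj u w)
    (hdeg : 2 * k ≤ G.degree u) :
    Fintype.card (kOutChoice G k u) ≤ 2 * Fintype.card {c : kOutChoice G k u // w ∉ c.1} := by
  classical
  have hmin : min k (G.degree u) = k := min_eq_left (by omega)
  have hwmem : w ∈ G.neighborFinset u := (SimpleGraph.mem_neighborFinset G u w).2 hadj
  have h1 : Fintype.card (kOutChoice G k u) = (G.degree u).choose k := by
    rw [Fintype.card_congr (Equiv.subtypeEquivRight (q := fun A =>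
        A ∈ (G.neighborFinset u).powersetCard k) (fun A => by
      simp only [hmin, Finset.mem_powersetCard]))]
    rw [Fintype.card_coe, Finset.card_powersetCard,
      SimpleGraph.card_neighborFinset_eq_degree]
  have h2 : Fintype.card {c : kOutChoice G k u // w ∉ c.1}
      = (G.degree u - 1).choose k := by
    have e1 : {c : kOutChoice G k u // w ∉ c.1}
        ≃ {A : Finset V // (A ⊆ G.neighborFinset u ∧ A.card = min k (G.degree u)) ∧ w ∉ A} :=
      Equiv.subtypeSubtypeEquivSubtypeInter
        (fun A : Finset V => A ⊆ G.neighborFinset u ∧ A.card = min k (G.degree u))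
        (fun A : Finset V => w ∉ A)
    have e2 : {A : Finset V // (A ⊆ G.neighborFinset u ∧ A.card = min k (G.degree u)) ∧ w ∉ A}
        ≃ {A : Finset V // A ∈ ((G.neighborFinset u).erase w).powersetCard k} :=
      Equiv.subtypeEquivRight (fun A => by
        simp only [hmin, Finset.mem_powersetCard, Finset.subset_erase]; tauto)
    rw [Fintype.card_congr (e1.trans e2), Fintype.card_coe, Finset.card_powersetCard,
      Finset.card_erase_of_mem hwmem, SimpleGraph.card_neighborFinset_eq_degree]
  rw [h1, h2]
  exact choose_le_two_mul k _ hk hdeg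

private lemma projWalk {α : Type} {n : ℕ} (T : SimpleGraph α)
    (G H : SimpleGraph (α ⊕ α × Fin n))
    (hG : ∀ x y : α ⊕ α × Fin n, G.Adj x y ↔
      ((∃ a b : α, T.Adj a b ∧ x = Sum.inl a ∧ y = Sum.inl b) ∨
       (∃ (a : α) (i : Fin n),
         (x = Sum.inl a ∧ y = Sum.inr (a, i)) ∨ (x = Sum.inr (a, i) ∧ y = Sum.inl a))))
    (hH : H ≤ G) :
    ∀ {u v} (_ : H.Walk u v), ∃ w' : T.Walk (Sum.elim id Prod.fst u) (Sum.elim id Prod.fst v),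
      ∀ x y : α, s(x, y) ∈ w'.edges → H.Adj (Sum.inl x) (Sum.inl y) := by
  intro u v w
  induction w with
  | nil => exact ⟨SimpleGraph.Walk.nil, by simp⟩
  | @cons u u' v h p ih =>
    obtain ⟨w', hw'⟩ := ih
    rcases (hG u u').1 (hH h) with ⟨a, b, hab, rfl, rfl⟩ | ⟨a, i, ⟨rfl, rfl⟩ | ⟨rfl, rfl⟩⟩
    · refine ⟨SimpleGraph.Walk.cons hab w', ?_⟩
      intro x y hxy
      change s(x, y) ∈ s(a, b) :: w'.edges at hxy
      rw [List.mem_cons] at hxy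
      rcases hxy with hxy | hxy
      · rcases Sym2.eq_iff.1 hxy with ⟨rfl, rfl⟩ | ⟨rfl, rfl⟩
        · exact h
        · exact h.symm
      · exact hw' x y hxy
    · exact ⟨w'.copy rfl rfl, fun x y hxy => hw' x y hxy⟩
    · exact ⟨w'.copy rfl rfl, fun x y hxy => hw' x y hxy⟩

private lemma unreach {α : Type} {n : ℕ} (T : SimpleGraph α) (hT : T.IsTree)
    (G H : SimpleGraph (α ⊕ α × Fin n))
    (hG : ∀ x y : α ⊕ α × Fin n, G.Adj x y ↔
      ((∃ a b : α, T.Adj a b ∧ x = Sum.inl a ∧ y = Sum.inl b) ∨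
       (∃ (a : α) (i : Fin n),
         (x = Sum.inl a ∧ y = Sum.inr (a, i)) ∨ (x = Sum.inr (a, i) ∧ y = Sum.inl a))))
    (hH : H ≤ G) {a b : α} (hab : T.Adj a b)
    (hnadj : ¬ H.Adj (Sum.inl a) (Sum.inl b)) :
    ¬ H.Reachable (Sum.inl a) (Sum.inl b) := by
  rintro ⟨w⟩
  obtain ⟨w', hw'⟩ := projWalk T G H hG hH w
  have hbridge : T.IsBridge s(a, b) :=
    (SimpleGraph.isAcyclic_iff_forall_edge_isBridge.1 hT.IsAcyclic)
      ((SimpleGraph.mem_edgeSet T).2 hab)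
  have := (SimpleGraph.isBridge_iff_adj_and_forall_walk_mem_edges.1 hbridge) w'
  exact hnadj (hw' a b this)

theorem kOut_tree_with_leaves_lower_bound
    {α : Type} [Fintype α] [DecidableEq α] (t k : ℕ) (hk : 1 ≤ k) (ht : 2 ≤ t)
    (hcard : Fintype.card α = t) (T : SimpleGraph α) (hT : T.IsTree)
    (G : SimpleGraph (α ⊕ α × Fin (2 * k - 1))) [DecidableRel G.Adj]
    (hG : ∀ x y : α ⊕ α × Fin (2 * k - 1), G.Adj x y ↔
      ((∃ a b : α, T.Adj a b ∧ x = Sum.inl a ∧ y = Sum.inl b) ∨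
       (∃ (a : α) (i : Fin (2 * k - 1)),
         (x = Sum.inl a ∧ y = Sum.inr (a, i)) ∨ (x = Sum.inr (a, i) ∧ y = Sum.inl a)))) :
    (∀ a b : α, T.Adj a b →
      (1 : ℝ) / 4 ≤
        (Set.ncard {ω : kOutSpace G k |
            ¬ (kOutGraph G k ω).Adj (Sum.inl a) (Sum.inl b)} : ℝ) /
          (Fintype.card (kOutSpace G k) : ℝ)) ∧
      ((t : ℝ) - 1) / 4 ≤ kOutExpect G k := by
  classical
  -- the random subgraph is a subgraph of `G`
  have hH_le : ∀ ω : kOutSpace G k, kOutGraph G k ω ≤ G := by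
    intro ω x y hxy
    rw [kOutGraph, SimpleGraph.fromRel_adj] at hxy
    rcases hxy.2 with h | h
    · exact (SimpleGraph.mem_neighborFinset G x y).1 ((ω x).2.1 h)
    · exact ((SimpleGraph.mem_neighborFinset G y x).1 ((ω y).2.1 h)).symm
  -- original tree vertices have degree at least `2k` in `G`
  have hdeg : ∀ a b : α, T.Adj a b → 2 * k ≤ G.degree (Sum.inl a) := by
    intro a b hab
    set S : Finset (α ⊕ α × Fin (2*k-1)) :=
      insert (Sum.inl b) ((univ : Finset (Fin (2*k-1))).image
        (fun i => (Sum.inr (a, i) : α ⊕ α × Fin (2*k-1)))) with hS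
    have hsub : S ⊆ G.neighborFinset (Sum.inl a) := by
      intro x hx
      rw [hS, Finset.mem_insert] at hx
      rw [SimpleGraph.mem_neighborFinset]
      rcases hx with rfl | hx
      · exact (hG _ _).2 (Or.inl ⟨a, b, hab, rfl, rfl⟩)
      · obtain ⟨i, _, rfl⟩ := Finset.mem_image.1 hx
        exact (hG _ _).2 (Or.inr ⟨a, i, Or.inl ⟨rfl, rfl⟩⟩)
    have hScard : S.card = 2 * k := by
      rw [hS, Finset.card_insert_of_notMem (by simp),
        Finset.card_image_of_injective _ (fun i j h => by simpa using h),
        Finset.card_univ, Fintype.card_fin]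
      omega
    calc 2 * k = S.card := hScard.symm
      _ ≤ (G.neighborFinset (Sum.inl a)).card := Finset.card_le_card hsub
      _ = G.degree (Sum.inl a) := SimpleGraph.card_neighborFinset_eq_degree _ _
  -- key counting bound for a `T`-edge
  have key : ∀ a b : α, T.Adj a b →
      Fintype.card (kOutSpace G k) ≤
        4 * Fintype.card {ω : kOutSpace G k //
            ¬ (kOutGraph G k ω).Adj (Sum.inl a) (Sum.inl b)} := by
    intro a b hab
    have hGab : G.Adj (Sum.inl a) (Sum.inl b) := (hG _ _).2 (Or.inl ⟨a, b, hab, rfl, rfl⟩)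
    have hne : (Sum.inl a : α ⊕ α × Fin (2*k-1)) ≠ Sum.inl b := by simp [hab.ne]
    have hiff : ∀ ω : kOutSpace G k,
        (¬ (kOutGraph G k ω).Adj (Sum.inl a) (Sum.inl b)) ↔
          ((Sum.inl b ∉ (ω (Sum.inl a)).1) ∧ (Sum.inl a ∉ (ω (Sum.inl b)).1)) := by
      intro ω
      rw [kOutGraph, SimpleGraph.fromRel_adj]
      constructor
      · intro h
        rcases not_and_or.1 h with h' | h'
        · exact absurd hne h'
        · exact not_or.1 h'
      · rintro ⟨h1, h2⟩ ⟨-, h | h⟩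
        exacts [h1 h, h2 h]
    obtain ⟨R, hE, hN⟩ := card_pi_two (kOutChoice G k)
      (u := Sum.inl a) (v := Sum.inl b) (by simp [hab.ne'])
      (fun c => Sum.inl b ∉ c.1) (fun c => Sum.inl a ∉ c.1)
    have hEq : Fintype.card {ω : kOutSpace G k //
          ¬ (kOutGraph G k ω).Adj (Sum.inl a) (Sum.inl b)}
        = Fintype.card {ω : ∀ v, kOutChoice G k v //
            (Sum.inl b ∉ (ω (Sum.inl a)).1) ∧ (Sum.inl a ∉ (ω (Sum.inl b)).1)} :=
      Fintype.card_congr (Equiv.subtypeEquivRight hiff)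
    rw [hEq, hE, hN]
    have c1 := choice_count G k hk (Sum.inl a) (Sum.inl b) hGab (hdeg a b hab)
    have c2 := choice_count G k hk (Sum.inl b) (Sum.inl a) hGab.symm (hdeg b a hab.symm)
    calc Fintype.card (kOutChoice G k (Sum.inl a)) *
          (Fintype.card (kOutChoice G k (Sum.inl b)) * R)
        ≤ (2 * Fintype.card {c : kOutChoice G k (Sum.inl a) // Sum.inl b ∉ c.1}) *
          ((2 * Fintype.card {c : kOutChoice G k (Sum.inl b) // Sum.inl a ∉ c.1}) * R) :=
          Nat.mul_le_mul c1 (Nat.mul_le_mul_right _ c2)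
      _ = 4 * (Fintype.card {c : kOutChoice G k (Sum.inl a) // Sum.inl b ∉ c.1} *
          (Fintype.card {c : kOutChoice G k (Sum.inl b) // Sum.inl a ∉ c.1} * R)) := by ring
  -- positivity of the sample space
  have : ∀ v, Nonempty (kOutChoice G k v) := kOutChoice_nonempty G k
  have hNE : Nonempty (kOutSpace G k) := ⟨fun v => Classical.arbitrary _⟩
  have Npos : 0 < Fintype.card (kOutSpace G k) := Fintype.card_pos
  have NposR : (0 : ℝ) < (Fintype.card (kOutSpace G k) : ℝ) := by exact_mod_cast Npos
  -- part 1
  have part1 : ∀ a b : α, T.Adj a b →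
      (1 : ℝ) / 4 ≤
        (Set.ncard {ω : kOutSpace G k |
            ¬ (kOutGraph G k ω).Adj (Sum.inl a) (Sum.inl b)} : ℝ) /
          (Fintype.card (kOutSpace G k) : ℝ) := by
    intro a b hab
    have hset : {ω : kOutSpace G k |
        ¬ (kOutGraph G k ω).Adj (Sum.inl a) (Sum.inl b)}.ncard
        = Fintype.card {ω : kOutSpace G k //
            ¬ (kOutGraph G k ω).Adj (Sum.inl a) (Sum.inl b)} := by
      rw [Set.ncard_eq_toFinset_card', Set.toFinset_setOf, Fintype.card_subtype]
    rw [hset, div_le_div_iff₀ (by norm_num) NposR]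
    have hcast := (Nat.cast_le (α := ℝ)).2 (key a b hab)
    push_cast at hcast ⊢
    linarith
  refine ⟨part1, ?_⟩
  -- part 2: expectation bound
  have hedge_good : ∀ a b : α, T.Adj a b → ∀ ω : kOutSpace G k,
      ¬ (kOutGraph G k ω).Adj (Sum.inl a) (Sum.inl b) →
      (s(Sum.inl a, Sum.inl b) : Sym2 (α ⊕ α × Fin (2*k-1))) ∈ G.edgeSet ∧
        ∀ u v, (s(Sum.inl a, Sum.inl b) : Sym2 (α ⊕ α × Fin (2*k-1))) = s(u, v) →
          ¬ (kOutGraph G k ω).Reachable u v := by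
    intro a b hab ω hmiss
    have hGab : G.Adj (Sum.inl a) (Sum.inl b) := (hG _ _).2 (Or.inl ⟨a, b, hab, rfl, rfl⟩)
    have hur := unreach T hT G (kOutGraph G k ω) hG (hH_le ω) hab hmiss
    refine ⟨hGab, ?_⟩
    intro u v huv
    rcases Sym2.eq_iff.1 huv with ⟨rfl, rfl⟩ | ⟨rfl, rfl⟩
    · exact hur
    · exact fun hr => hur hr.symm
  -- per-outcome lower bound on the inter-component count
  have hperω : ∀ ω : kOutSpace G k,
      (T.edgeFinset.filter
        (fun e => Sym2.map Sum.inl e ∉ (kOutGraph G k ω).edgeSet)).card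
        ≤ interCompCount G (kOutGraph G k ω) := by
    intro ω
    rw [interCompCount]
    have himg : ↑((T.edgeFinset.filter
        (fun e => Sym2.map Sum.inl e ∉ (kOutGraph G k ω).edgeSet)).image (Sym2.map (@Sum.inl α (α × Fin (2*k-1)))))
        ⊆ {e : Sym2 (α ⊕ α × Fin (2*k-1)) | e ∈ G.edgeSet ∧
            ∀ u v, e = s(u, v) → ¬ (kOutGraph G k ω).Reachable u v} := by
      intro e' he'
      simp only [Finset.coe_image, Set.mem_image, Finset.mem_coe, Finset.mem_filter] at he'
      obtain ⟨e, he, rfl⟩ := he'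
      revert he
      refine Sym2.ind (fun a b he => ?_) e
      obtain ⟨heT, hmiss⟩ := he
      have hab : T.Adj a b := (SimpleGraph.mem_edgeSet T).1 (SimpleGraph.mem_edgeFinset.1 heT)
      rw [Sym2.map_pair_eq] at hmiss ⊢
      exact hedge_good a b hab ω (fun h => hmiss ((SimpleGraph.mem_edgeSet _).2 h))
    calc (T.edgeFinset.filter
          (fun e => Sym2.map Sum.inl e ∉ (kOutGraph G k ω).edgeSet)).card
        = ((T.edgeFinset.filter
          (fun e => Sym2.map Sum.inl e ∉ (kOutGraph G k ω).edgeSet)).image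
            (Sym2.map (@Sum.inl α (α × Fin (2*k-1))))).card :=
          (Finset.card_image_of_injective _ (Sym2.map.injective Sum.inl_injective)).symm
      _ = (((T.edgeFinset.filter
          (fun e => Sym2.map Sum.inl e ∉ (kOutGraph G k ω).edgeSet)).image
            (Sym2.map (@Sum.inl α (α × Fin (2*k-1)))) : Finset _) :
              Set (Sym2 (α ⊕ α × Fin (2*k-1)))).ncard :=
          (Set.ncard_coe_finset _).symm
      _ ≤ _ := Set.ncard_le_ncard himg (Set.toFinite _)
  -- per-edge counting bound
  have hedge : ∀ e ∈ T.edgeFinset,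
      Fintype.card (kOutSpace G k) ≤ 4 * (univ.filter (fun ω : kOutSpace G k =>
        Sym2.map Sum.inl e ∉ (kOutGraph G k ω).edgeSet)).card := by
    intro e
    refine Sym2.ind (fun a b he => ?_) e
    have hab : T.Adj a b := (SimpleGraph.mem_edgeSet T).1 (SimpleGraph.mem_edgeFinset.1 he)
    have h1 : (univ.filter (fun ω : kOutSpace G k =>
        Sym2.map Sum.inl s(a, b) ∉ (kOutGraph G k ω).edgeSet)).card
        = Fintype.card {ω : kOutSpace G k //
            ¬ (kOutGraph G k ω).Adj (Sum.inl a) (Sum.inl b)} := by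
      rw [Fintype.card_subtype]
      apply Finset.card_bij (fun ω _ => ω) <;> simp [Sym2.map_pair_eq, SimpleGraph.mem_edgeSet]
    rw [h1]
    exact key a b hab
  -- summing up
  have hswap : ∑ ω : kOutSpace G k, (T.edgeFinset.filter
        (fun e => Sym2.map Sum.inl e ∉ (kOutGraph G k ω).edgeSet)).card
      = ∑ e ∈ T.edgeFinset, (univ.filter (fun ω : kOutSpace G k =>
          Sym2.map Sum.inl e ∉ (kOutGraph G k ω).edgeSet)).card := by
    simp_rw [Finset.card_filter]
    rw [Finset.sum_comm]
  have main2 : T.edgeFinset.card * Fintype.card (kOutSpace G k)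
      ≤ 4 * ∑ ω : kOutSpace G k, interCompCount G (kOutGraph G k ω) := by
    calc T.edgeFinset.card * Fintype.card (kOutSpace G k)
        = ∑ _e ∈ T.edgeFinset, Fintype.card (kOutSpace G k) := by
          rw [Finset.sum_const, smul_eq_mul]
      _ ≤ ∑ e ∈ T.edgeFinset, 4 * (univ.filter (fun ω : kOutSpace G k =>
            Sym2.map Sum.inl e ∉ (kOutGraph G k ω).edgeSet)).card :=
          Finset.sum_le_sum hedge
      _ = 4 * ∑ e ∈ T.edgeFinset, (univ.filter (fun ω : kOutSpace G k =>
            Sym2.map Sum.inl e ∉ (kOutGraph G k ω).edgeSet)).card := by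
          rw [Finset.mul_sum]
      _ = 4 * ∑ ω : kOutSpace G k, (T.edgeFinset.filter
            (fun e => Sym2.map Sum.inl e ∉ (kOutGraph G k ω).edgeSet)).card := by
          rw [hswap]
      _ ≤ 4 * ∑ ω : kOutSpace G k, interCompCount G (kOutGraph G k ω) :=
          Nat.mul_le_mul_left _ (Finset.sum_le_sum (fun ω _ => hperω ω))
  have hcardT : (T.edgeFinset.card : ℝ) = (t : ℝ) - 1 := by
    have h := hT.card_edgeFinset
    rw [hcard] at h
    have : (T.edgeFinset.card : ℝ) + 1 = (t : ℝ) := by exact_mod_cast h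
    linarith
  rw [kOutExpect, div_le_div_iff₀ (by norm_num) NposR]
  have hcast := (Nat.cast_le (α := ℝ)).2 main2
  push_cast at hcast
  rw [hcardT] at hcast
  linarith
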